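/- Let α > 0 be real and z a real number with |z| < 1/(α+1). Then the series ∑_{n≥1} (α+1)^{n−1}·C(n−1−1/(α+1), n−1)·z^n/n converges and its sum equals 1 − (1−(α+1)z)^{1/(α+1)}. Equivalently, the total weight of (b,α)-plane oriented recursive trees of size n is T_n = (n−1)!·(α+1)^{n−1}·C(n−1−1/(α+1), n−1), i.e. T_n/n! is the n-th Taylor coefficient of 1 − (1−(α+1)z)^{1/(α+1)} at z = 0. -/

import Mathlib

/-- The generalized binomial coefficient `C(x, n) = x(x-1)⋯(x-n+1)/n!`. -/
noncomputable def genBinom (x : ℝ) (n : ℕ) : ℝ :=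
    (∏ i ∈ Finset.range n, (x - i)) / (n.factorial : ℝ)

private lemma genBinom_abs_le {r : ℝ} (hr0 : 0 < r) (hr1 : r < 1) (n : ℕ) :
    |genBinom r n| ≤ 1 := by
  have hfac : (∏ i ∈ Finset.range n, ((i : ℝ) + 1)) = (n.factorial : ℝ) := by
    exact_mod_cast Finset.prod_range_add_one_eq_factorial n
  have hprod : |∏ i ∈ Finset.range n, (r - (i : ℝ))| ≤ (n.factorial : ℝ) := by
    rw [Finset.abs_prod, ← hfac]
    apply Finset.prod_le_prod (fun i _ => abs_nonneg _)
    intro i _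
    have h0 : (0:ℝ) ≤ (i:ℝ) := Nat.cast_nonneg i
    rw [abs_le]
    constructor <;> nlinarith
  have hfacpos : (0:ℝ) < (n.factorial : ℝ) := by positivity
  rw [genBinom, abs_div, abs_of_pos hfacpos, div_le_one hfacpos]
  exact hprod

private lemma summable_mul_geom {q : ℝ} (h0 : 0 ≤ q) (h1 : q < 1) :
    Summable (fun n : ℕ => (n : ℝ) * q ^ (n - 1)) := by
  rw [← summable_nat_add_iff 1]
  have h : Summable (fun n : ℕ => ((n : ℝ) ^ 1 * q ^ n + q ^ n)) :=
    (summable_pow_mul_geometric_of_norm_lt_one 1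
      (by rwa [Real.norm_eq_abs, abs_of_nonneg h0])).add (summable_geometric_of_lt_one h0 h1)
  apply h.congr
  intro n
  simp only [Nat.add_sub_cancel, pow_one]
  push_cast
  ring

private lemma genBinom_rec (r : ℝ) (n : ℕ) :
    ((n : ℝ) + 1) * genBinom r (n + 1) = (r - n) * genBinom r n := by
  have hfac : ((n + 1).factorial : ℝ) = ((n : ℝ) + 1) * (n.factorial : ℝ) := by
    rw [Nat.factorial_succ]; push_cast; ring
  rw [genBinom, genBinom, Finset.prod_range_succ, hfac]
  have h1 : (0:ℝ) < (n.factorial : ℝ) := by positivity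
  have h2 : (0:ℝ) < (n : ℝ) + 1 := by positivity
  field_simp

private lemma hasSum_genBinom {r : ℝ} (hr0 : 0 < r) (hr1 : r < 1) {y : ℝ} (hy : |y| < 1) :
    HasSum (fun n : ℕ => genBinom r n * y ^ n) ((1 + y) ^ r) := by
  set c : ℕ → ℝ := genBinom r with hc
  have habs : ∀ n, |c n| ≤ 1 := genBinom_abs_le hr0 hr1
  have hsum : ∀ x : ℝ, |x| < 1 → Summable (fun n => c n * x ^ n) := by
    intro x hx
    apply Summable.of_norm_bounded (summable_geometric_of_lt_one (abs_nonneg x) hx)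
    intro n
    rw [Real.norm_eq_abs, abs_mul, abs_pow]
    calc |c n| * |x| ^ n ≤ 1 * |x| ^ n :=
          mul_le_mul_of_nonneg_right (habs n) (by positivity)
      _ = |x| ^ n := by ring
  have hsum' : ∀ x : ℝ, |x| < 1 → Summable (fun n : ℕ => c n * ((n : ℝ) * x ^ (n - 1))) := by
    intro x hx
    apply Summable.of_norm_bounded (summable_mul_geom (abs_nonneg x) hx)
    intro n
    rw [Real.norm_eq_abs, abs_mul, abs_mul, abs_pow, Nat.abs_cast]
    calc |c n| * ((n:ℝ) * |x| ^ (n-1)) ≤ 1 * ((n:ℝ) * |x| ^ (n-1)) :=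
          mul_le_mul_of_nonneg_right (habs n) (by positivity)
      _ = (n:ℝ) * |x| ^ (n-1) := by ring
  set F : ℝ → ℝ := fun x => ∑' n, c n * x ^ n with hF
  have hFs : ∀ x : ℝ, |x| < 1 → HasSum (fun n => c n * x ^ n) (F x) :=
    fun x hx => (hsum x hx).hasSum
  -- term-by-term differentiation
  have hderiv : ∀ x : ℝ, |x| < 1 →
      HasDerivAt F (∑' n, c n * ((n : ℝ) * x ^ (n - 1))) x := by
    intro x hx
    set t : ℝ := (|x| + 1) / 2 with ht
    have ht0 : 0 < t := by positivity
    have ht1 : t < 1 := by simp only [ht]; linarith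
    have hxt : |x| < t := by simp only [ht]; linarith [abs_nonneg x]
    have hg : ∀ (n : ℕ) (y : ℝ), y ∈ Metric.ball (0:ℝ) t →
        HasDerivAt (fun w => c n * w ^ n) (c n * ((n : ℝ) * y ^ (n - 1))) y :=
      fun n y _ => (hasDerivAt_pow n y).const_mul (c n)
    have hg' : ∀ (n : ℕ) (y : ℝ), y ∈ Metric.ball (0:ℝ) t →
        ‖c n * ((n : ℝ) * y ^ (n - 1))‖ ≤ (n : ℝ) * t ^ (n - 1) := by
      intro n y hyb
      have hyt : |y| < t := by simpa [Real.dist_eq] using hyb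
      rw [Real.norm_eq_abs, abs_mul, abs_mul, abs_pow, Nat.abs_cast]
      calc |c n| * ((n:ℝ) * |y| ^ (n-1)) ≤ 1 * ((n:ℝ) * |y| ^ (n-1)) :=
            mul_le_mul_of_nonneg_right (habs n) (by positivity)
        _ = (n:ℝ) * |y| ^ (n-1) := by ring
        _ ≤ (n:ℝ) * t ^ (n-1) := by
            apply mul_le_mul_of_nonneg_left _ (Nat.cast_nonneg n)
            exact pow_le_pow_left₀ (abs_nonneg y) hyt.le _
    have h0mem : (0:ℝ) ∈ Metric.ball (0:ℝ) t := Metric.mem_ball_self ht0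
    have hxmem : x ∈ Metric.ball (0:ℝ) t := by simpa [Real.dist_eq] using hxt
    have hg0 : Summable (fun n : ℕ => c n * (0:ℝ) ^ n) := by
      apply summable_of_ne_finset_zero (s := ({0} : Finset ℕ))
      intro n hn
      simp only [Finset.mem_singleton] at hn
      simp [zero_pow hn]
    exact hasDerivAt_tsum_of_isPreconnected (summable_mul_geom ht0.le ht1)
      Metric.isOpen_ball (convex_ball (0:ℝ) t).isPreconnected hg hg' h0mem hg0 hxmem
  -- the ODE `(1 + x) * F' x = r * F x`
  have hode : ∀ x : ℝ, |x| < 1 →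
      (1 + x) * (∑' n, c n * ((n : ℝ) * x ^ (n - 1))) = r * F x := by
    intro x hx
    set D : ℝ := ∑' n, c n * ((n : ℝ) * x ^ (n - 1)) with hD
    have hDs : HasSum (fun n : ℕ => c n * ((n : ℝ) * x ^ (n - 1))) D := (hsum' x hx).hasSum
    have hshift : HasSum (fun n : ℕ => (r - n) * c n * x ^ n) D := by
      have h1 : HasSum (fun n : ℕ => c (n+1) * (((n+1:ℕ) : ℝ) * x ^ ((n+1) - 1))) D := by
        refine (hasSum_nat_add_iff (f := fun n : ℕ => c n * ((n : ℝ) * x ^ (n - 1))) 1).2 ?_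
        simpa using hDs
      have h0 : (fun n : ℕ => c (n+1) * (((n+1:ℕ) : ℝ) * x ^ ((n+1) - 1))) =
          (fun n : ℕ => (r - n) * c n * x ^ n) := by
        funext n
        have hrec := genBinom_rec r n
        simp only [hc] at hrec ⊢
        simp only [Nat.add_sub_cancel]
        push_cast
        linear_combination x ^ n * hrec
      rwa [h0] at h1
    have hmul : HasSum (fun n : ℕ => (n : ℝ) * c n * x ^ n) (x * D) := by
      have heq : (fun n : ℕ => x * (c n * ((n:ℝ) * x ^ (n-1)))) =
          fun n : ℕ => (n:ℝ) * c n * x ^ n := by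
        funext n
        cases n with
        | zero => simp
        | succ m =>
          simp only [Nat.add_sub_cancel]
          push_cast
          ring
      exact heq ▸ (hDs.mul_left x)
    have hadd := hshift.add hmul
    have heq2 : (fun n : ℕ => (r - n) * c n * x ^ n + (n:ℝ) * c n * x ^ n) =
        fun n : ℕ => r * (c n * x ^ n) := by
      funext n; ring
    rw [heq2] at hadd
    have hrF : HasSum (fun n : ℕ => r * (c n * x ^ n)) (r * F x) := (hFs x hx).mul_left r
    have := hadd.unique hrF
    linarith [this]
  -- the auxiliary function `G x = F x * (1+x)^(-r)` has zero derivative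
  have key : ∀ x : ℝ, |x| < 1 → HasDerivAt (fun w => F w * (1 + w) ^ (-r)) 0 x := by
    intro x hx
    have hx1 : (0:ℝ) < 1 + x := by
      rcases abs_lt.1 hx with ⟨h1, _⟩; linarith
    have hD := hderiv x hx
    have h1x : HasDerivAt (fun w : ℝ => 1 + w) 1 x := (hasDerivAt_id x).const_add 1
    have h1 : HasDerivAt (fun w : ℝ => (1 + w) ^ (-r))
        (1 * (-r) * (1 + x) ^ (-r - 1)) x :=
      h1x.rpow_const (Or.inl (ne_of_gt hx1))
    have hmul := hD.mul h1
    have hzero : (∑' n, c n * ((n : ℝ) * x ^ (n - 1))) * (1 + x) ^ (-r)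
        + F x * (1 * (-r) * (1 + x) ^ (-r - 1)) = 0 := by
      have hpow : (1 + x) ^ (-r) = (1 + x) * (1 + x) ^ (-r - 1) := by
        have he : -r = 1 + (-r - 1) := by ring
        nth_rewrite 1 [he]
        rw [Real.rpow_add hx1, Real.rpow_one]
      rw [hpow]
      have := hode x hx
      linear_combination ((1 + x) ^ (-r - 1)) * this
    rwa [hzero] at hmul
  -- `G` is constant, so `F y = (1+y)^r`
  have hF0 : F 0 = 1 := by
    have h1 : HasSum (fun n : ℕ => c n * (0:ℝ) ^ n) (c 0 * (0:ℝ) ^ 0) := by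
      apply hasSum_single 0
      intro b hb
      simp [zero_pow hb]
    have h2 := hFs 0 (by norm_num)
    have := h2.unique h1
    simpa [hc, genBinom] using this
  have hy1 : (0:ℝ) < 1 + y := by
    rcases abs_lt.1 hy with ⟨h1, _⟩; linarith
  have habs_mem : ∀ x : ℝ, x ∈ Set.Icc (min 0 y) (max 0 y) → |x| < 1 := by
    intro x hxm
    rcases abs_lt.1 hy with ⟨h1, h2⟩
    rcases hxm with ⟨hl, hr⟩
    rw [abs_lt]
    constructor
    · rcases le_total 0 y with h | h
      · simp [min_eq_left h] at hl; linarith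
      · simp [min_eq_right h] at hl; linarith
    · rcases le_total 0 y with h | h
      · simp [max_eq_right h] at hr; linarith
      · simp [max_eq_left h] at hr; linarith
  have hGconst : F y * (1 + y) ^ (-r) = F 0 * (1 + 0) ^ (-r) := by
    set G : ℝ → ℝ := fun w => F w * (1 + w) ^ (-r) with hG
    rcases le_total 0 y with hy0 | hy0
    · have hmm : ∀ x ∈ Set.Icc (0:ℝ) y, |x| < 1 := by
        intro x hxm
        apply habs_mem
        rw [min_eq_left hy0, max_eq_right hy0]; exact hxm
      have := constant_of_has_deriv_right_zero (f := G) (a := 0) (b := y)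
        (fun x hxm => (key x (hmm x hxm)).continuousAt.continuousWithinAt)
        (fun x hxm => ((key x (hmm x ⟨hxm.1, hxm.2.le⟩)).hasDerivWithinAt))
        y (Set.right_mem_Icc.2 hy0)
      simpa [hG] using this
    · have hmm : ∀ x ∈ Set.Icc y (0:ℝ), |x| < 1 := by
        intro x hxm
        apply habs_mem
        rw [min_eq_right hy0, max_eq_left hy0]; exact hxm
      have := constant_of_has_deriv_right_zero (f := G) (a := y) (b := 0)
        (fun x hxm => (key x (hmm x hxm)).continuousAt.continuousWithinAt)
        (fun x hxm => ((key x (hmm x ⟨hxm.1, hxm.2.le⟩)).hasDerivWithinAt))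
        0 (Set.right_mem_Icc.2 hy0)
      simpa [hG] using this.symm
  have hfin : F y = (1 + y) ^ r := by
    have h10 : ((1:ℝ) + 0) ^ (-r) = 1 := by norm_num
    rw [hF0, h10, mul_one] at hGconst
    have hmulpow : (1 + y) ^ (-r) * (1 + y) ^ r = 1 := by
      rw [← Real.rpow_add hy1]
      norm_num
    calc F y = F y * ((1 + y) ^ (-r) * (1 + y) ^ r) := by rw [hmulpow, mul_one]
      _ = (F y * (1 + y) ^ (-r)) * (1 + y) ^ r := by ring
      _ = 1 * (1 + y) ^ r := by rw [hGconst]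
      _ = (1 + y) ^ r := by ring
  rw [← hfin]
  exact hFs y hy

theorem bport_total_weights (α : ℝ) (hα : 0 < α) (z : ℝ) (hz : |z| < 1 / (α + 1)) :
    HasSum
      (fun m : ℕ => (α + 1) ^ m * genBinom ((m : ℝ) - 1 / (α + 1)) m
        * z ^ (m + 1) / ((m : ℝ) + 1))
      (1 - (1 - (α + 1) * z) ^ (1 / (α + 1))) := by
  have ha1 : (0:ℝ) < α + 1 := by linarith
  set r : ℝ := 1 / (α + 1) with hrdef
  have hr0 : 0 < r := by positivity
  have hr1 : r < 1 := by
    rw [hrdef, div_lt_one ha1]; linarith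
  have hone : r * (α + 1) = 1 := by
    rw [hrdef]; field_simp
  set y : ℝ := -((α + 1) * z) with hydef
  have hy : |y| < 1 := by
    rw [hydef, abs_neg, abs_mul, abs_of_pos ha1]
    calc (α+1) * |z| < (α+1) * (1/(α+1)) := by
          exact mul_lt_mul_of_pos_left hz ha1
      _ = 1 := by field_simp
  have h1y : 1 + y = 1 - (α + 1) * z := by rw [hydef]; ring
  have hs := hasSum_genBinom hr0 hr1 hy
  have hneg := hs.neg
  have hshift : HasSum (fun m : ℕ => -(genBinom r (m+1) * y ^ (m+1))) (1 - (1+y) ^ r) := by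
    have h := (hasSum_nat_add_iff' (f := fun n : ℕ => -(genBinom r n * y ^ n)) 1).2 hneg
    convert h using 1
    · rfl
    simp [genBinom]
    ring
  rw [← h1y]
  have hterm : (fun m : ℕ => (α + 1) ^ m * genBinom ((m : ℝ) - r) m
      * z ^ (m + 1) / ((m : ℝ) + 1)) =
      fun m : ℕ => -(genBinom r (m+1) * y ^ (m+1)) := by
    funext m
    have hP : (∏ j ∈ Finset.range m, (((m:ℝ) - r) - (j:ℝ))) =
        ∏ i ∈ Finset.range m, (((i:ℝ) + 1) - r) := by
      rw [← Finset.prod_range_reflect (fun i : ℕ => ((i:ℝ) + 1) - r) m]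
      apply Finset.prod_congr rfl
      intro j hj
      rw [Finset.mem_range] at hj
      have h1 : 1 ≤ m := Nat.one_le_of_lt (Nat.lt_of_le_of_lt (Nat.zero_le j) hj)
      have h2 : j ≤ m - 1 := Nat.le_sub_one_of_lt hj
      have hcast : ((m - 1 - j : ℕ) : ℝ) = (m:ℝ) - 1 - (j:ℝ) := by
        rw [Nat.cast_sub h2, Nat.cast_sub h1]
        norm_num
      rw [hcast]
      ring
    have hQ : (∏ i ∈ Finset.range (m+1), (r - (i:ℝ))) =
        r * (((-1:ℝ)) ^ m * ∏ i ∈ Finset.range m, (((i:ℝ) + 1) - r)) := by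
      rw [Finset.prod_range_succ']
      have hcongr : ∀ i ∈ Finset.range m, (r - ((i+1 : ℕ):ℝ)) = (-1) * (((i:ℝ) + 1) - r) := by
        intro i _
        push_cast
        ring
      rw [Finset.prod_congr rfl hcongr, Finset.prod_mul_distrib, Finset.prod_const,
        Finset.card_range, Nat.cast_zero]
      ring
    have hfact : (((m+1).factorial : ℕ) : ℝ) = ((m:ℝ) + 1) * (m.factorial : ℝ) := by
      rw [Nat.factorial_succ]; push_cast; ring
    have hm1 : ((-1:ℝ)) ^ m * (-1) ^ m = 1 := by
      rw [← pow_add, ← two_mul, pow_mul]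
      norm_num
    set P : ℝ := ∏ i ∈ Finset.range m, (((i:ℝ) + 1) - r) with hPdef
    have hL : (α + 1) ^ m * genBinom ((m : ℝ) - r) m * z ^ (m + 1) / ((m : ℝ) + 1)
        = (α + 1) ^ m * (P / (m.factorial : ℝ)) * z ^ (m + 1) / ((m : ℝ) + 1) := by
      rw [genBinom, hP]
    have hR : -(genBinom r (m+1) * y ^ (m+1))
        = (α + 1) ^ m * (P / (m.factorial : ℝ)) * z ^ (m + 1) / ((m : ℝ) + 1) := by
      have hyy : y ^ (m+1) * ((-1:ℝ)) ^ m = -(((α+1) * z) ^ (m+1)) := by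
        rw [hydef, neg_pow]
        linear_combination (-(((α+1) * z) ^ (m+1))) * hm1
      rw [genBinom, hQ, hfact]
      calc -(r * (((-1:ℝ)) ^ m * P) / (((m:ℝ) + 1) * (m.factorial : ℝ)) * y ^ (m+1))
          = (r * P / (((m:ℝ) + 1) * (m.factorial : ℝ))) * (-(y ^ (m+1) * ((-1:ℝ)) ^ m)) := by
            ring
        _ = (r * P / (((m:ℝ) + 1) * (m.factorial : ℝ))) * ((α+1) * z) ^ (m+1) := by
            rw [hyy]; ring
        _ = (r * (α+1)) * ((α+1) ^ m * P * z ^ (m+1) / (((m:ℝ) + 1) * (m.factorial : ℝ))) := by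
            rw [mul_pow]; ring
        _ = (α + 1) ^ m * (P / (m.factorial : ℝ)) * z ^ (m + 1) / ((m : ℝ) + 1) := by
            rw [hone]
            have hf0 : (m.factorial : ℝ) ≠ 0 := by positivity
            have hm0 : ((m:ℝ) + 1) ≠ 0 := by positivity
            field_simp
    rw [hL, ← hR]
  rw [hterm]
  exact hshift
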